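/- Let ψ : [a,b] → ℂ be continuous and define F(z) = ∫_a^b ψ(u)/(u-z) du for z ∉ [a,b]. If there exist C, R > 0 such that |F(z)| ≤ C/|z|² for all |z| ≥ R, then ∫_a^b ψ(u) du = 0. -/

import Mathlib

theorem zero_mass_lemma (a b : ℝ) (hab : a ≤ b) (ψ : ℝ → ℂ)
    (hψ : ContinuousOn ψ (Set.Icc a b))
    (F : ℂ → ℂ) (hF : ∀ z : ℂ, z ∉ ((↑) '' Set.Icc a b : Set ℂ) →
      F z = ∫ u in a..b, ψ u / ((u : ℂ) - z))
    (hdecay : ∃ C > 0, ∃ R > 0, ∀ z : ℂ, R ≤ ‖z‖ → ‖F z‖ ≤ C / ‖z‖ ^ 2) :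
    (∫ u in a..b, ψ u) = 0 := by
  obtain ⟨C, hC, R, hR, hdec⟩ := hdecay
  obtain ⟨M, hM⟩ := isCompact_Icc.exists_bound_of_continuousOn hψ
  have hM0 : 0 ≤ M := le_trans (norm_nonneg _) (hM a ⟨le_refl a, hab⟩)
  set K := max |a| |b| with hK
  have hK0 : 0 ≤ K := le_trans (abs_nonneg a) (le_max_left _ _)
  set D := C + (b - a) * (M * K) with hD
  have hD0 : 0 < D := by
    have : 0 ≤ (b - a) * (M * K) := mul_nonneg (by linarith) (by positivity)
    linarith
  set I : ℂ := ∫ u in a..b, ψ u with hI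
  have key : ∀ t : ℝ, max R 1 ≤ t → ‖I‖ ≤ D / t := by
    intro t ht
    have htR : R ≤ t := le_trans (le_max_left _ _) ht
    have ht1 : (1:ℝ) ≤ t := le_trans (le_max_right _ _) ht
    have ht0 : 0 < t := lt_of_lt_of_le one_pos ht1
    set z : ℂ := Complex.I * t with hz
    have hz_norm : ‖z‖ = t := by
      simp [hz, abs_of_pos ht0]
    have hzne : ∀ u : ℝ, (u:ℂ) - z ≠ 0 := by
      intro u h
      have him := congrArg Complex.im h
      simp [hz] at him
      linarith
    have hznotin : z ∉ ((↑) '' Set.Icc a b : Set ℂ) := by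
      rintro ⟨u, _, h⟩
      exact hzne u (by rw [h, sub_self])
    have hlower : ∀ u : ℝ, t ≤ ‖(u:ℂ) - z‖ := by
      intro u
      have h1 := Complex.abs_im_le_norm ((u:ℂ) - z)
      have h2 : ((u:ℂ) - z).im = -t := by simp [hz]
      rw [h2] at h1
      simpa [abs_of_pos ht0] using h1
    -- continuity / integrability
    have hcsub : ContinuousOn (fun u : ℝ => (u:ℂ) - z) (Set.Icc a b) :=
      (Complex.continuous_ofReal.continuousOn).sub continuousOn_const
    have hcont_g : ContinuousOn (fun u : ℝ => ψ u * u / ((u:ℂ) - z)) (Set.Icc a b) :=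
      (hψ.mul (Complex.continuous_ofReal.continuousOn)).div hcsub (fun u _ => hzne u)
    have hcont_h : ContinuousOn (fun u : ℝ => z * (ψ u / ((u:ℂ) - z))) (Set.Icc a b) :=
      continuousOn_const.mul (hψ.div hcsub (fun u _ => hzne u))
    have hig : IntervalIntegrable (fun u : ℝ => ψ u * u / ((u:ℂ) - z)) MeasureTheory.volume a b :=
      ContinuousOn.intervalIntegrable (by rwa [Set.uIcc_of_le hab])
    have hih : IntervalIntegrable (fun u : ℝ => z * (ψ u / ((u:ℂ) - z))) MeasureTheory.volume a b :=
      ContinuousOn.intervalIntegrable (by rwa [Set.uIcc_of_le hab])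
    have heq : I = (∫ u in a..b, ψ u * u / ((u:ℂ) - z)) - z * F z := by
      rw [hF z hznotin, ← intervalIntegral.integral_const_mul,
        ← intervalIntegral.integral_sub hig hih]
      apply intervalIntegral.integral_congr
      intro u _
      have h := hzne u
      field_simp
    have hbound1 : ‖∫ u in a..b, ψ u * u / ((u:ℂ) - z)‖ ≤ (M * K / t) * (b - a) := by
      have := intervalIntegral.norm_integral_le_of_norm_le_const
        (a := a) (b := b) (C := M * K / t)
        (f := fun u : ℝ => ψ u * u / ((u:ℂ) - z)) ?_
      · calc ‖∫ u in a..b, ψ u * u / ((u:ℂ) - z)‖ ≤ M * K / t * |b - a| := this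
          _ = (M * K / t) * (b - a) := by rw [abs_of_nonneg (by linarith)]
      · intro u hu
        rw [Set.uIoc_of_le hab] at hu
        have huI : u ∈ Set.Icc a b := Set.Ioc_subset_Icc_self hu
        have h1 : ‖ψ u * (u:ℂ)‖ ≤ M * K := by
          rw [norm_mul]
          apply mul_le_mul (hM u huI) ?_ (norm_nonneg _) hM0
          rw [Complex.norm_real]
          have ha : -K ≤ a := by
            have := le_max_left |a| |b|; have := neg_abs_le a; simp only [hK]; linarith
          have hb : b ≤ K := le_trans (le_abs_self b) (le_max_right _ _)
          exact abs_le.mpr ⟨by linarith [huI.1], by linarith [huI.2]⟩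
        rw [norm_div]
        exact div_le_div₀ (by positivity) h1 ht0 (hlower u)
    have hbound2 : ‖z * F z‖ ≤ C / t := by
      rw [norm_mul, hz_norm]
      calc t * ‖F z‖ ≤ t * (C / t ^ 2) := by
            apply mul_le_mul_of_nonneg_left _ (le_of_lt ht0)
            have := hdec z (by rwa [hz_norm])
            rwa [hz_norm] at this
        _ = C / t := by field_simp
    calc ‖I‖ ≤ ‖∫ u in a..b, ψ u * u / ((u:ℂ) - z)‖ + ‖z * F z‖ := by
          rw [heq]; exact norm_sub_le _ _
      _ ≤ (M * K / t) * (b - a) + C / t := add_le_add hbound1 hbound2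
      _ = D / t := by rw [hD]; field_simp; ring
  by_contra h
  have hN : 0 < ‖I‖ := norm_pos_iff.mpr h
  set t := max (max R 1) (D / ‖I‖ + 1) with htdef
  have ht2 : D / ‖I‖ + 1 ≤ t := le_max_right _ _
  have ht0 : 0 < t := lt_of_lt_of_le (by positivity) ht2
  have h1 := key t (le_max_left _ _)
  have h2 : D / t < ‖I‖ := by
    rw [div_lt_iff₀ ht0]
    have h3 : ‖I‖ * (D / ‖I‖ + 1) ≤ ‖I‖ * t := by
      exact mul_le_mul_of_nonneg_left ht2 (le_of_lt hN)
    have h4 : ‖I‖ * (D / ‖I‖) = D := by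
      rw [mul_comm, div_mul_cancel₀ D (ne_of_gt hN)]
    nlinarith
  linarith
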